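/- Let E be a finite B-semimodule with free rank 1 (a finite totally ordered set with minimum 0). Then the map y ↦ ℓ_y, where ℓ_y(x) = 0 if x ≤ y and 1 if x > y, is a bijection from E onto the set Hom_B(E, B) of B-linear maps E → B; moreover it is an order-reversing bijection (ℓ identifies Hom_B(E,B) with E equipped with the opposite order and min as addition). -/

import Mathlib

/-- Let `E` be a finite `B`-semimodule of free rank 1 (a finite totally ordered set with
minimum `0 = ⊥`, join as addition). The map `y ↦ ℓ_y`, `ℓ_y x = decide (y < x)`, is a
bijection of `E` onto `Hom_B(E, B)` (the maps `L : E → Bool` with `L ⊥ = false` and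
`L (x ⊔ x') = L x || L x'`), and it is order-reversing: `y ≤ y' ↔ ℓ_{y'} ≤ ℓ_y`
pointwise, identifying `Hom_B(E,B)` with `E` with the opposite order (min as addition). -/
theorem stmt16 (E : Type*) [LinearOrder E] [OrderBot E] [Fintype E] :
    let ℓ : E → E → Bool := fun y x => decide (y < x)
    (∀ y : E, ℓ y ⊥ = false ∧ ∀ x x' : E, ℓ y (x ⊔ x') = (ℓ y x || ℓ y x')) ∧
    Function.Injective ℓ ∧
    (∀ L : E → Bool, L ⊥ = false → (∀ x x' : E, L (x ⊔ x') = (L x || L x')) →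
      ∃ y : E, L = ℓ y) ∧
    (∀ y y' : E, y ≤ y' ↔ ∀ x : E, ℓ y' x ≤ ℓ y x) := by
  intro ℓ
  refine ⟨?_, ?_, ?_, ?_⟩
  · intro y
    constructor
    · simp [ℓ]
    · intro x x'
      simp [ℓ, lt_sup_iff]
  · intro y y' h
    by_contra hne
    rcases Ne.lt_or_gt hne with hlt | hlt
    · have := congrFun h y'
      simp [ℓ, hlt, lt_irrefl] at this
    · have := congrFun h y
      simp [ℓ, hlt, lt_irrefl] at this
  · intro L hbot hadd
    have hmono : ∀ x x' : E, x ≤ x' → L x = true → L x' = true := by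
      intro x x' hle hx
      have : x ⊔ x' = x' := sup_eq_right.mpr hle
      have := hadd x x'
      rw [sup_eq_right.mpr hle, hx] at this
      simp only [Bool.true_or] at this
      exact this
    have hne : ({x : E | L x = false} : Finset E).Nonempty := by
      · exact ⟨⊥, Finset.mem_filter.mpr ⟨Finset.mem_univ _, hbot⟩⟩
    refine ⟨({x : E | L x = false} : Finset E).max' hne, ?_⟩
    funext x
    set y := ({x : E | L x = false} : Finset E).max' hne with hy
    have hLy : L y = false := by
      have := Finset.max'_mem _ hne
      simpa using this
    by_cases hx : y < x
    · simp only [ℓ, hx, decide_true]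
      by_contra hLx
      have hLx' : L x = false := by simpa using hLx
      have : x ≤ y := Finset.le_max' _ x (by simpa using hLx')
      exact absurd hx (not_lt.mpr this)
    · simp only [ℓ, hx, decide_false]
      have hxy : x ≤ y := not_lt.mp hx
      cases h : L x with
      | false => rfl
      | true => rw [hmono x y hxy h] at hLy; exact hLy.symm ▸ rfl
  · intro y y'
    constructor
    · intro h x
      simp only [ℓ]
      by_cases hx : y' < x
      · simp [hx, lt_of_le_of_lt h hx]
      · simp [hx]
    · intro h
      by_contra hle
      have hlt : y' < y := not_le.mp hle
      have := h y
      simp only [ℓ, hlt, decide_true, decide_eq_false (lt_irrefl y)] at this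
      exact absurd this (by decide)
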